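/- Let R be a ring and Π a nonzero R-module of finite length whose socle S = soc(Π) is a simple module occurring with multiplicity one among the composition factors of Π. If M is a nonzero submodule of Π such that every simple quotient of M is isomorphic to S, then M = soc(Π); in particular, M is a simple module. -/
import Mathlib


/-- The socle of a module: the sum of all its simple submodules, i.e. its maximal
semisimple submodule. -/
def moduleSocle (R M : Type*) [Ring R] [AddCommGroup M] [Module R M] :
    Submodule R M :=
  sSup {N : Submodule R M | IsSimpleModule R N}

/-- For submodules `N ≤ P` of `M`, the section `P / N` (the quotient of `P` by the
image of `N` in `P`); for a composition series `B_0 ⊂ B_1 ⊂ ⋯ ⊂ B_k`, the modules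
`sectionQuot (B i) (B (i+1))` are its composition factors. -/
def sectionQuot {R M : Type*} [Ring R] [AddCommGroup M] [Module R M]
    (N P : Submodule R M) : Type _ :=
  P ⧸ (Submodule.comap P.subtype N)

noncomputable instance {R M : Type*} [Ring R] [AddCommGroup M] [Module R M]
    (N P : Submodule R M) : AddCommGroup (sectionQuot N P) :=
  inferInstanceAs (AddCommGroup (P ⧸ (Submodule.comap P.subtype N)))

noncomputable instance {R M : Type*} [Ring R] [AddCommGroup M] [Module R M]
    (N P : Submodule R M) : Module R (sectionQuot N P) :=
  inferInstanceAs (Module R (P ⧸ (Submodule.comap P.subtype N)))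


section helpers
variable {R : Type*} [Ring R] {P : Type*} [AddCommGroup P] [Module R P]

/-- Between `X ≤ Y` in an Artinian+Noetherian module there is a covering chain. -/
theorem exists_covby_chain [IsNoetherian R P] [IsArtinian R P] :
    ∀ X Y : Submodule R P, X ≤ Y →
    ∃ (k : ℕ) (C : Fin (k + 1) → Submodule R P),
      C 0 = X ∧ C (Fin.last k) = Y ∧ ∀ i : Fin k, C i.castSucc ⋖ C i.succ := by
  have wf : WellFounded ((· > ·) : Submodule R P → Submodule R P → Prop) :=
    wellFounded_gt
  intro X
  induction X using wf.induction with
  | _ X IH =>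
    intro Y hXY
    rcases eq_or_lt_of_le hXY with h | h
    · exact ⟨0, fun _ => X, rfl, h, fun i => i.elim0⟩
    · -- pick a minimal element of {Z | X < Z ≤ Y}
      obtain ⟨Z, ⟨hXZ, hZY⟩, hmin⟩ :=
        (wellFounded_lt (α := Submodule R P)).has_min {Z | X < Z ∧ Z ≤ Y} ⟨Y, h, le_rfl⟩
      have hcov : X ⋖ Z := ⟨hXZ, fun W hXW hWZ => hmin W ⟨hXW, hWZ.le.trans hZY⟩ hWZ⟩
      obtain ⟨k, C, hC0, hClast, hCstep⟩ := IH Z hXZ Y hZY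
      refine ⟨k + 1, fun i => if h : i.val = 0 then X else C ⟨i.val - 1, by omega⟩,
        by simp, ?_, ?_⟩
      · have : (Fin.last (k+1)).val = k + 1 := rfl
        simp only [this]
        rw [dif_neg (by omega)]
        simpa [Fin.last] using hClast
      · intro i
        simp only [Fin.coe_castSucc, Fin.val_succ]
        rcases Nat.eq_zero_or_pos i.val with h0 | h0
        · rw [dif_pos h0, dif_neg (by omega)]
          have e : (⟨i.val + 1 - 1, by omega⟩ : Fin (k+1)) = 0 :=
            Fin.ext (by show i.val + 1 - 1 = 0; omega)
          rw [e, hC0]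
          exact hcov
        · have hi : i.val < k + 1 := i.isLt
          rw [dif_neg (by omega), dif_neg (by omega)]
          have := hCstep ⟨i.val - 1, by omega⟩
          have e1 : (⟨i.val - 1, by omega⟩ : Fin k).castSucc = ⟨i.val - 1, by omega⟩ := rfl
          have e2 : (⟨i.val - 1, by omega⟩ : Fin k).succ = ⟨i.val - 1 + 1, by omega⟩ := rfl
          rw [e1, e2] at this
          have e3 : (⟨i.val + 1 - 1, by omega⟩ : Fin (k+1)) = ⟨i.val - 1 + 1, by omega⟩ :=
            Fin.ext (by show i.val + 1 - 1 = i.val - 1 + 1; omega)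
          rw [e3]
          exact this

/-- In a module whose socle is simple, the socle is contained in every nonzero
submodule (assuming Artinian, so atoms exist below nonzero submodules). -/
theorem socle_le_of_ne_bot [IsArtinian R P]
    (hsoc : IsSimpleModule R (moduleSocle R P))
    {Q : Submodule R P} (hQ : Q ≠ ⊥) : moduleSocle R P ≤ Q := by
  obtain ⟨Z, ⟨hZ0, hZQ⟩, hmin⟩ :=
    (wellFounded_lt (α := Submodule R P)).has_min {Z | ⊥ < Z ∧ Z ≤ Q}
      ⟨Q, Ne.bot_lt hQ, le_rfl⟩
  have hZatom : IsAtom Z := ⟨hZ0.ne', fun W hWZ => by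
    by_contra hW
    exact hmin W ⟨Ne.bot_lt hW, hWZ.le.trans hZQ⟩ hWZ⟩
  have hZsimple : IsSimpleModule R Z := isSimpleModule_iff_isAtom.mpr hZatom
  have hZle : Z ≤ moduleSocle R P := le_sSup hZsimple
  have hsocAtom : IsAtom (moduleSocle R P) := isSimpleModule_iff_isAtom.mp hsoc
  rcases hsocAtom.le_iff.mp hZle with h | h
  · exact absurd h hZatom.1
  · exact h ▸ hZQ

end helpers

theorem sectionQuot_isSimple {R : Type*} [Ring R] {P : Type*} [AddCommGroup P] [Module R P]
    {A B : Submodule R P} (h : A ⋖ B) : IsSimpleModule R (sectionQuot A B) :=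
  (covBy_iff_quot_is_simple h.le).mp h

set_option maxHeartbeats 1000000 in
/-- **Abstract SI trick.** Let `R` be a ring and `Π` a nonzero `R`-module of finite
length whose socle `S = soc(Π)` is a simple module occurring with multiplicity one
among the composition factors of `Π` (i.e. in every composition series
`0 = B_0 ⊂ B_1 ⊂ ⋯ ⊂ B_k = Π` exactly one factor `B_{i+1}/B_i` is isomorphic to
`S`).  If `M` is a nonzero submodule of `Π` such that every simple quotient of `M`
is isomorphic to `S`, then `M = soc(Π)`; in particular, `M` is a simple module. -/
theorem eq_socle_of_simple_quotients {R : Type*} [Ring R]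
    {P : Type*} [AddCommGroup P] [Module R P]
    (hfl : IsFiniteLength R P) (hnz : Nontrivial P)
    (hsoc_simple : IsSimpleModule R (moduleSocle R P))
    (hmult : ∀ (k : ℕ) (B : Fin (k + 1) → Submodule R P),
      B 0 = ⊥ → B (Fin.last k) = ⊤ →
      (∀ i : Fin k, B i.castSucc < B i.succ ∧
        IsSimpleModule R (sectionQuot (B i.castSucc) (B i.succ))) →
      ∃! i : Fin k,
        Nonempty ((sectionQuot (B i.castSucc) (B i.succ)) ≃ₗ[R] moduleSocle R P))
    (M : Submodule R P) (hMnz : M ≠ ⊥)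
    (hquot : ∀ N : Submodule R M, IsSimpleModule R (M ⧸ N) →
      Nonempty ((M ⧸ N) ≃ₗ[R] moduleSocle R P)) :
    M = moduleSocle R P ∧ IsSimpleModule R M := by
  obtain ⟨hNoeth, hArt⟩ := isFiniteLength_iff_isNoetherian_isArtinian.mp hfl
  have hSatom : IsAtom (moduleSocle R P) := isSimpleModule_iff_isAtom.mp hsoc_simple
  have hSleM : moduleSocle R P ≤ M := socle_le_of_ne_bot hsoc_simple hMnz
  obtain ⟨N, hNM, hmax⟩ :=
    (wellFounded_gt (α := Submodule R P)).has_min {Z | Z < M} ⟨⊥, Ne.bot_lt hMnz⟩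
  have hcov : N ⋖ M := ⟨hNM, fun W hNW hWM => hmax W hWM hNW⟩
  rcases eq_or_ne N ⊥ with hNbot | hNbot
  · have hMatom : IsAtom M := bot_covBy_iff.mp (hNbot ▸ hcov)
    have hMS : M = moduleSocle R P := by
      rcases hMatom.le_iff.mp hSleM with h | h
      · exact absurd h hSatom.1
      · exact h.symm
    refine ⟨hMS, ?_⟩
    rw [hMS]
    exact hsoc_simple
  · exfalso
    have hSN : moduleSocle R P ≤ N := socle_le_of_ne_bot hsoc_simple hNbot
    obtain ⟨k1, C1, hC10, hC1last, hC1step⟩ := exists_covby_chain (moduleSocle R P) N hSN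
    obtain ⟨k2, C2, hC20, hC2last, hC2step⟩ := exists_covby_chain M ⊤ le_top
    set k := k1 + k2 + 2 with hk
    set B : Fin (k + 1) → Submodule R P := fun i =>
      if i.val = 0 then ⊥
      else if h : i.val ≤ k1 + 1 then C1 ⟨i.val - 1, by omega⟩
      else C2 ⟨i.val - (k1 + 2), by have := i.isLt; omega⟩ with hB
    have hB0 : B 0 = ⊥ := by simp [hB]
    have hBeq1 : ∀ (n : ℕ) (hn : n < k + 1) (j : Fin (k1 + 1)), n = j.val + 1 →
        B ⟨n, hn⟩ = C1 j := by
      intro n hn j hj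
      subst hj
      rw [hB]
      simp only []
      rw [if_neg (by omega), dif_pos (by have := j.isLt; omega)]
      exact congrArg C1 (Fin.ext (by show j.val + 1 - 1 = j.val; omega))
    have hBeq2 : ∀ (n : ℕ) (hn : n < k + 1) (j : Fin (k2 + 1)), n = j.val + (k1 + 2) →
        B ⟨n, hn⟩ = C2 j := by
      intro n hn j hj
      subst hj
      rw [hB]
      simp only []
      rw [if_neg (by omega), dif_neg (by omega)]
      exact congrArg C2 (Fin.ext (by show j.val + (k1 + 2) - (k1 + 2) = j.val; omega))
    have hBlast : B (Fin.last k) = ⊤ := by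
      have h1 : B (Fin.last k) = C2 (Fin.last k2) :=
        hBeq2 k (by omega) (Fin.last k2) (by show k = k2 + (k1 + 2); omega)
      exact h1.trans hC2last
    have hstep : ∀ i : Fin k, B i.castSucc ⋖ B i.succ := by
      intro i
      have hiv : i.val < k := i.isLt
      rcases Nat.eq_zero_or_pos i.val with h0 | h0
      · have l : B i.castSucc = ⊥ := by
          have : B i.castSucc = B 0 :=
            congrArg B (Fin.ext (by simp only [Fin.coe_castSucc, Fin.val_zero]; omega))
          exact this.trans hB0
        have r : B i.succ = moduleSocle R P := by
          have h1 : B i.succ = C1 0 :=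
            hBeq1 (i.val + 1) (by omega) 0 (by simp only [Fin.val_zero]; omega)
          exact h1.trans hC10
        rw [l, r]
        exact hSatom.bot_covBy
      · rcases lt_or_ge i.val (k1 + 1) with hlt | hge
        · set j : Fin k1 := ⟨i.val - 1, by omega⟩ with hj
          have l : B i.castSucc = C1 j.castSucc :=
            hBeq1 i.val (by omega) j.castSucc (by show i.val = i.val - 1 + 1; omega)
          have r : B i.succ = C1 j.succ :=
            hBeq1 (i.val + 1) (by omega) j.succ (by show i.val + 1 = i.val - 1 + 1 + 1; omega)
          rw [l, r]
          exact hC1step j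
        · rcases eq_or_lt_of_le hge with heq | hgt
          · have l : B i.castSucc = N := by
              have h1 : B i.castSucc = C1 (Fin.last k1) :=
                hBeq1 i.val (by omega) (Fin.last k1) (by show i.val = k1 + 1; omega)
              exact h1.trans hC1last
            have r : B i.succ = M := by
              have h1 : B i.succ = C2 0 :=
                hBeq2 (i.val + 1) (by omega) 0 (by simp only [Fin.val_zero]; omega)
              exact h1.trans hC20
            rw [l, r]
            exact hcov
          · set j : Fin k2 := ⟨i.val - (k1 + 2), by omega⟩ with hj
            have l : B i.castSucc = C2 j.castSucc :=
              hBeq2 i.val (by omega) j.castSucc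
                (by show i.val = i.val - (k1 + 2) + (k1 + 2); omega)
            have r : B i.succ = C2 j.succ :=
              hBeq2 (i.val + 1) (by omega) j.succ
                (by show i.val + 1 = i.val - (k1 + 2) + 1 + (k1 + 2); omega)
            rw [l, r]
            exact hC2step j
    obtain ⟨j, hj, huniq⟩ := hmult k B hB0 hBlast
      (fun i => ⟨(hstep i).lt, sectionQuot_isSimple (hstep i)⟩)
    have hk1 : (0 : ℕ) < k := by omega
    have hk2 : k1 + 1 < k := by omega
    set i₁ : Fin k := ⟨0, hk1⟩ with hi₁
    set i₂ : Fin k := ⟨k1 + 1, hk2⟩ with hi₂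
    have e10 : B i₁.castSucc = ⊥ := by
      have : B i₁.castSucc = B 0 :=
        congrArg B (Fin.ext (by simp only [Fin.coe_castSucc, Fin.val_zero, hi₁]))
      exact this.trans hB0
    have e11 : B i₁.succ = moduleSocle R P := by
      have h1 : B i₁.succ = C1 0 := hBeq1 1 (by omega) 0 (by simp only [Fin.val_zero])
      exact h1.trans hC10
    have e20 : B i₂.castSucc = N := by
      have h1 : B i₂.castSucc = C1 (Fin.last k1) :=
        hBeq1 (k1 + 1) (by omega) (Fin.last k1) rfl
      exact h1.trans hC1last
    have e21 : B i₂.succ = M := by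
      have h1 : B i₂.succ = C2 0 :=
        hBeq2 (k1 + 2) (by omega) 0 (by simp only [Fin.val_zero]; omega)
      exact h1.trans hC20
    have hiso₁ : Nonempty ((sectionQuot (B i₁.castSucc) (B i₁.succ)) ≃ₗ[R] moduleSocle R P) := by
      rw [e10, e11]
      exact ⟨Submodule.quotEquivOfEqBot _
        (by rw [Submodule.comap_bot, Submodule.ker_subtype])⟩
    have hiso₂ : Nonempty ((sectionQuot (B i₂.castSucc) (B i₂.succ)) ≃ₗ[R] moduleSocle R P) := by
      rw [e20, e21]
      exact hquot (Submodule.comap M.subtype N) ((covBy_iff_quot_is_simple hcov.le).mp hcov)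
    have h1 := huniq i₁ hiso₁
    have h2 := huniq i₂ hiso₂
    have h12 : i₁ = i₂ := h1.trans h2.symm
    have := congrArg Fin.val h12
    simp only [hi₁, hi₂] at this
    omega
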